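/- Let Y1, Y0 be random variables valued in {0,...,J-1} with Y0 ≤ Y1 almost surely, and let y', y ∈ {0,...,J-1} with y' ≤ y. Then pr(Y1 = y, Y0 = y') ≥ pr(Y1 = y) + pr(Y0 = y') - (pr(Y0 ≤ y) - pr(Y1 < y')). -/

import Mathlib

open MeasureTheory Finset

/-- Probability of an event as a real number. -/
noncomputable def pr {Ω : Type*} [MeasurableSpace Ω] (μ : Measure Ω) (s : Set Ω) : ℝ :=
  (μ s).toReal

/-- Lower bound on the joint probability `pr(Y1 = y, Y0 = y')` under monotonicity. -/
theorem joint_lower_bound_mono {Ω : Type*} [MeasurableSpace Ω] (μ : Measure Ω)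
    [IsProbabilityMeasure μ] (J : ℕ) (Y1 Y0 : Ω → ℕ)
    (hY1m : Measurable Y1) (hY0m : Measurable Y0)
    (hY1 : ∀ ω, Y1 ω < J) (hY0 : ∀ ω, Y0 ω < J)
    (hmono : ∀ᵐ ω ∂μ, Y0 ω ≤ Y1 ω)
    (y' y : ℕ) (hy' : y' < J) (hy : y < J) (hle : y' ≤ y) :
    pr μ {ω | Y1 ω = y} + pr μ {ω | Y0 ω = y'}
        - (pr μ {ω | Y0 ω ≤ y} - pr μ {ω | Y1 ω < y'})
      ≤ pr μ {ω | Y1 ω = y ∧ Y0 ω = y'} := by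
  set A : Set Ω := {ω | Y1 ω = y} with hAdef
  set B : Set Ω := {ω | Y0 ω = y'} with hBdef
  set C : Set Ω := {ω | Y1 ω < y'} with hCdef
  set S : Set Ω := {ω | Y0 ω ≤ y} with hSdef
  have hA : MeasurableSet A := hY1m (measurableSet_singleton y)
  have hB : MeasurableSet B := hY0m (measurableSet_singleton y')
  have hC : MeasurableSet C := hY1m measurableSet_Iio
  have hS : MeasurableSet S := hY0m measurableSet_Iic
  have hnull : μ {ω | ¬ Y0 ω ≤ Y1 ω} = 0 := by
    rw [← MeasureTheory.ae_iff] ; exact hmono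
  -- inclusion-exclusion
  have h1 : μ (A ∪ B) + μ (A ∩ B) = μ A + μ B :=
    measure_union_add_inter A hB
  -- AE disjointness of A ∪ B and C
  have h2 : AEDisjoint μ (A ∪ B) C := by
    apply measure_mono_null _ hnull
    rintro ω ⟨hab, hc⟩
    simp only [hAdef, hBdef, hCdef, Set.mem_setOf_eq, Set.mem_union] at hab hc ⊢
    intro h01
    rcases hab with h | h
    · omega
    · omega
  have h3 : μ ((A ∪ B) ∪ C) = μ (A ∪ B) + μ C :=
    measure_union₀ hC.nullMeasurableSet h2
  -- (A ∪ B) ∪ C ⊆ S almost everywhere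
  have h4 : μ ((A ∪ B) ∪ C) ≤ μ S := by
    apply measure_mono_ae
    filter_upwards [hmono] with ω h01
    intro hmem
    obtain (h | h) | h := hmem
    · have h' : Y1 ω = y := h; show Y0 ω ≤ y; omega
    · have h' : Y0 ω = y' := h; show Y0 ω ≤ y; omega
    · have h' : Y1 ω < y' := h; show Y0 ω ≤ y; omega
  have hfin : ∀ s : Set Ω, μ s ≠ ⊤ := fun s => measure_ne_top μ s
  have key : μ A + μ B + μ C ≤ μ (A ∩ B) + μ S := by
    calc μ A + μ B + μ C = μ (A ∪ B) + μ (A ∩ B) + μ C := by rw [h1]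
    _ = μ (A ∩ B) + (μ (A ∪ B) + μ C) := by ring
    _ = μ (A ∩ B) + μ ((A ∪ B) ∪ C) := by rw [h3]
    _ ≤ μ (A ∩ B) + μ S := add_le_add_right h4 _
  have hAB : {ω | Y1 ω = y ∧ Y0 ω = y'} = A ∩ B := rfl
  rw [hAB]
  have keyR : pr μ A + pr μ B + pr μ C ≤ pr μ (A ∩ B) + pr μ S := by
    unfold pr
    rw [← ENNReal.toReal_add (hfin A) (hfin B), ← ENNReal.toReal_add (by
      exact ENNReal.add_ne_top.mpr ⟨hfin A, hfin B⟩) (hfin C),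
      ← ENNReal.toReal_add (hfin _) (hfin S)]
    exact ENNReal.toReal_mono (ENNReal.add_ne_top.mpr ⟨hfin _, hfin S⟩) key
  linarith
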